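/- Lemma I.2: Suppose in a two-user allocation bins 1 and 2 are both shared, with user 1 receiving fractions α_1, α_2 and user 2 receiving β_1 = 1−α_1, β_2 = 1−α_2, and suppose R_{11}/R_{21} = R_{12}/R_{22}. Then there exists an alternative allocation of bins 1 and 2 in which at most one of the two bins is shared (the other is fully assigned to a single user), such that both users' total rates from these two bins are unchanged: specifically, if α_1 R_{11}/R_{12} ≤ β_2 one can set user 1's share of bin 1 to zero and increase his share of bin 2 by α_1 R_{11}/R_{12}; otherwise one can set user 2's share of bin 2 to zero and increase his share of bin 1 by β_2 R_{22}/R_{21}, and in both cases all shares remain in [0,1] and each user's combined rate over bins 1 and 2 is preserved. -/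
import Mathlib

/-- Lemma I.2: if bins 1 and 2 are both shared and their rate ratios coincide, then there
is an alternative allocation of these two bins in which at most one bin is shared and both
users' rates from the two bins are unchanged. -/
theorem merge_two_shared_bins (R11 R12 R21 R22 : ℝ)
    (h11 : 0 < R11) (h12 : 0 < R12) (h21 : 0 < R21) (h22 : 0 < R22)
    (hratio : R11 * R22 = R12 * R21)
    (α1 α2 : ℝ) (hα1 : 0 < α1) (hα1' : α1 < 1) (hα2 : 0 < α2) (hα2' : α2 < 1) :
    ∃ α1' α2' : ℝ,
      0 ≤ α1' ∧ α1' ≤ 1 ∧ 0 ≤ α2' ∧ α2' ≤ 1 ∧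
      (α1' = 0 ∨ α1' = 1 ∨ α2' = 0 ∨ α2' = 1) ∧
      α1' * R11 + α2' * R12 = α1 * R11 + α2 * R12 ∧
      (1 - α1') * R21 + (1 - α2') * R22 = (1 - α1) * R21 + (1 - α2) * R22 := by
  by_cases h : α2 + α1 * R11 / R12 ≤ 1
  · refine ⟨0, α2 + α1 * R11 / R12, le_rfl, by linarith, ?_, h, Or.inl rfl, ?_, ?_⟩
    · have : 0 < α1 * R11 / R12 := by positivity
      linarith
    · field_simp
      ring
    · field_simp
      nlinarith [hα1.le, hα2.le]
  · push_neg at h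
    refine ⟨α1 - (1 - α2) * R12 / R11, 1, ?_, ?_, zero_le_one, le_rfl,
      Or.inr (Or.inr (Or.inr rfl)), ?_, ?_⟩
    · have h1 : α1 * R11 / R12 > 1 - α2 := by linarith
      have : (1 - α2) * R12 / R11 ≤ α1 := by
        rw [div_le_iff₀ h11]
        rw [gt_iff_lt, lt_div_iff₀ h12] at h1
        nlinarith
      linarith
    · have : 0 ≤ (1 - α2) * R12 / R11 := by
        apply div_nonneg _ h11.le
        nlinarith
      linarith
    · field_simp
      ring
    · field_simp
      nlinarith [hα2'.le]
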